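/- The map F_V(α,β): (x,y) ↦ (y+P, x+P) with P = (α−β)/(x−y) satisfies the Yang–Baxter relation: for all parameters α₁,α₂,α₃ and all points where the compositions are defined, F_V^{23}(α₂,α₃)∘F_V^{13}(α₁,α₃)∘F_V^{12}(α₁,α₂) = F_V^{12}(α₁,α₂)∘F_V^{13}(α₁,α₃)∘F_V^{23}(α₂,α₃). -/

import Mathlib

open Function

variable {K : Type*} [Field K]

/-- lift a map on pairs to act on coordinates 1,2 of a triple -/
def lift12 {X : Type*} (f : X × X → X × X) : X × X × X → X × X × X :=
  fun p => ((f (p.1, p.2.1)).1, (f (p.1, p.2.1)).2, p.2.2)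

/-- lift to coordinates 1,3 -/
def lift13 {X : Type*} (f : X × X → X × X) : X × X × X → X × X × X :=
  fun p => ((f (p.1, p.2.2)).1, p.2.1, (f (p.1, p.2.2)).2)

/-- lift to coordinates 2,3 -/
def lift23 {X : Type*} (f : X × X → X × X) : X × X × X → X × X × X :=
  fun p => (p.1, (f (p.2.1, p.2.2)).1, (f (p.2.1, p.2.2)).2)

def FVMap (a b : K) : K × K → K × K :=
  fun p => (p.2 + (a - b)/(p.1 - p.2), p.1 + (a - b)/(p.1 - p.2))

set_option maxHeartbeats 4000000 in
theorem yangBaxter_FV (a1 a2 a3 x y z : K)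
    (h1 : (x - y) ≠ 0)
    (h2 : ((lift12 (FVMap a1 a2) (x, y, z)).1 - (lift12 (FVMap a1 a2) (x, y, z)).2.2) ≠ 0)
    (h3 : ((lift13 (FVMap a1 a3) (lift12 (FVMap a1 a2) (x, y, z))).2.1 - (lift13 (FVMap a1 a3) (lift12 (FVMap a1 a2) (x, y, z))).2.2) ≠ 0)
    (h4 : (y - z) ≠ 0)
    (h5 : ((lift23 (FVMap a2 a3) (x, y, z)).1 - (lift23 (FVMap a2 a3) (x, y, z)).2.2) ≠ 0)
    (h6 : ((lift13 (FVMap a1 a3) (lift23 (FVMap a2 a3) (x, y, z))).1 - (lift13 (FVMap a1 a3) (lift23 (FVMap a2 a3) (x, y, z))).2.1) ≠ 0) :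
    lift23 (FVMap a2 a3) (lift13 (FVMap a1 a3) (lift12 (FVMap a1 a2) (x, y, z))) =
      lift12 (FVMap a1 a2) (lift13 (FVMap a1 a3) (lift23 (FVMap a2 a3) (x, y, z))) := by
  simp only [lift12, lift13, lift23, FVMap] at h2 h3 h5 h6
  have e1 : y + (a1 - a2) / (x - y) - z = ((y - z) * (x - y) + (a1 - a2)) / (x - y) := by
    field_simp; ring
  have e2 : x - y - (a2 - a3) / (y - z) = ((y - z) * (x - y) + (a3 - a2)) / (y - z) := by
    field_simp; ring
  have e2' : x - (y + (a2 - a3) / (y - z)) = ((y - z) * (x - y) + (a3 - a2)) / (y - z) := by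
    field_simp; ring
  have hA : (y - z) * (x - y) + (a1 - a2) ≠ 0 := by
    intro h; apply h2; rw [e1, h, zero_div]
  have hB : (y - z) * (x - y) + (a3 - a2) ≠ 0 := by
    intro h; apply h5; rw [e2', h, zero_div]
  have key1 : (a1 - a3) / (y + (a1 - a2) / (x - y) - z)
      = (a2 - a3) / (y - z)
        + (a1 - a2) / (y + (a1 - a3) / (x - y - (a2 - a3) / (y - z)) - z) := by
    rw [e1, e2, div_div_eq_mul_div, div_div_eq_mul_div]
    have e3 : y + (a1 - a3) * (y - z) / ((y - z) * (x - y) + (a3 - a2)) - z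
        = (y - z) * ((y - z) * (x - y) + (a1 - a2)) / ((y - z) * (x - y) + (a3 - a2)) := by
      field_simp; ring
    rw [e3, div_div_eq_mul_div]
    rw [div_add_div _ _ h4 (mul_ne_zero h4 hA), div_eq_div_iff hA (mul_ne_zero h4 (mul_ne_zero h4 hA))]
    ring
  have key2 : (a1 - a2) / (x - y)
        + (a2 - a3) / (x - y - (a1 - a3) / (y + (a1 - a2) / (x - y) - z))
      = (a1 - a3) / (x - y - (a2 - a3) / (y - z)) := by
    rw [e1, e2, div_div_eq_mul_div, div_div_eq_mul_div]
    have e4 : x - y - (a1 - a3) * (x - y) / ((y - z) * (x - y) + (a1 - a2))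
        = (x - y) * ((y - z) * (x - y) + (a3 - a2)) / ((y - z) * (x - y) + (a1 - a2)) := by
      rw [eq_div_iff hA, sub_mul, div_mul_cancel₀ _ hA]; ring
    rw [e4, div_div_eq_mul_div]
    rw [div_add_div _ _ h1 (mul_ne_zero h1 hB), div_eq_div_iff (mul_ne_zero h1 (mul_ne_zero h1 hB)) hB]
    ring
  simp only [lift12, lift13, lift23, FVMap]
  refine Prod.ext ?_ (Prod.ext ?_ ?_)
  · exact by linear_combination key1
  · exact by linear_combination key1 + key2
  · exact by linear_combination key2
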